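/- Let S ⊆ S' be saturated multiplicatively closed subsets of R. Suppose M is semi-S-factorable and S ∩ Z(M) = ∅. If M is an S'-UFM, an S'-HFM, or an S'-FFM, then M is an S-BFM. Moreover, if M is an S-BFM, then R \ Ann(M) is compactly S-atomic (as a subset of the R-module R). -/

import Mathlib

namespace FactorizationPaper

variable {R : Type*} [CommRing R]

/-- `S` is a saturated multiplicatively closed subset of `R`:
it contains `1`, is closed under multiplication, and `x*y ∈ S` implies `x ∈ S` and `y ∈ S`. -/
def Saturated (S : Set R) : Prop :=
  1 ∈ S ∧ (∀ x ∈ S, ∀ y ∈ S, x * y ∈ S) ∧ ∀ x y : R, x * y ∈ S → x ∈ S ∧ y ∈ S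

/-- The submonoid of `R` associated to a saturated multiplicatively closed set. -/
def Saturated.submonoid {S : Set R} (hS : Saturated S) : Submonoid R where
  carrier := S
  one_mem' := hS.1
  mul_mem' := fun {a b} ha hb => hS.2.1 a ha b hb

section ElementDefs

variable (S : Set R) {N : Type*} [AddCommGroup N] [Module R N]

/-- `m ∼^S n` : `m` and `n` are S-associates. -/
def SAssoc (m n : N) : Prop := (∃ s ∈ S, m = s • n) ∧ (∃ s ∈ S, n = s • m)

/-- `m ≈^S n` : `m` and `n` are S-strong associates. -/
def SStrongAssoc (m n : N) : Prop := ∃ u : R, IsUnit u ∧ u ∈ S ∧ m = u • n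

/-- `m ≅^S n` : `m` and `n` are S-very strong associates. -/
def SVeryStrongAssoc (m n : N) : Prop :=
  SAssoc S m n ∧ ((m = 0 ∧ n = 0) ∨ ∀ s ∈ S, m = s • n → IsUnit s)

/-- `m` is S-primitive. -/
def SPrimitive (m : N) : Prop := ∀ s ∈ S, ∀ n : N, m = s • n → SAssoc S n m

/-- `m` is S-strongly primitive. -/
def SStronglyPrimitive (m : N) : Prop := ∀ s ∈ S, ∀ n : N, m = s • n → SStrongAssoc S n m

/-- `m` is S-very strongly primitive. -/
def SVeryStronglyPrimitive (m : N) : Prop := ∀ s ∈ S, ∀ n : N, m = s • n → SVeryStrongAssoc S n m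

/-- the three kinds of S-primitivity, indexed by `Fin 3` :
`0` = primitive, `1` = strongly primitive, `2` = very strongly primitive. -/
def PrimOf (k : Fin 3) (m : N) : Prop :=
  match k with
  | 0 => SPrimitive S m
  | 1 => SStronglyPrimitive S m
  | 2 => SVeryStronglyPrimitive S m

/-- `m = s • n` is a compact S-atomic factorization of `m`. -/
def IsCompactFactorization (m : N) (s : R) (n : N) : Prop :=
  s ∈ S ∧ SPrimitive S n ∧ m = s • n

/-- `m = s₁ ⋯ s_k • n` (with the `sᵢ` the members of the list `l`, nonunits in `S`)
is an S-factorization of `m`, of length `l.length`. -/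
def IsSFactorization (m : N) (l : List R) (n : N) : Prop :=
  (∀ s ∈ l, s ∈ S ∧ ¬ IsUnit s) ∧ m = l.prod • n

end ElementDefs

/-- `a ∼ b` : associates in `R` (i.e. S-associates with `S = R`, in `R` as an `R`-module). -/
def Assoc (a b : R) : Prop := SAssoc (Set.univ : Set R) a b

/-- `a ≈ b` : strong associates in `R`. -/
def StrongAssoc (a b : R) : Prop := SStrongAssoc (Set.univ : Set R) a b

/-- `a ≅ b` : very strong associates in `R`. -/
def VeryStrongAssoc (a b : R) : Prop := SVeryStrongAssoc (Set.univ : Set R) a b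

/-- `a` is irreducible. -/
def Irred (a : R) : Prop := ¬ IsUnit a ∧ ∀ b c : R, a = b * c → Assoc a b ∨ Assoc a c

/-- `a` is strongly irreducible. -/
def StrongIrred (a : R) : Prop :=
  ¬ IsUnit a ∧ ∀ b c : R, a = b * c → StrongAssoc a b ∨ StrongAssoc a c

/-- `a` is very strongly irreducible. -/
def VeryStrongIrred (a : R) : Prop :=
  ¬ IsUnit a ∧ ∀ b c : R, a = b * c → VeryStrongAssoc a b ∨ VeryStrongAssoc a c

/-- the three kinds of irreducibility, indexed by `Fin 3` :
`0` = irreducible, `1` = strongly irreducible, `2` = very strongly irreducible. -/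
def IrredOf (k : Fin 3) (a : R) : Prop :=
  match k with
  | 0 => Irred a
  | 1 => StrongIrred a
  | 2 => VeryStrongIrred a

section ElementDefs2

variable (S : Set R) {N : Type*} [AddCommGroup N] [Module R N]

/-- `m = s₁ ⋯ s_k • n` is an S-atomic factorization
(each `sᵢ` irreducible and in `S`, `n` S-primitive). -/
def IsSAtomicFactorization (m : N) (l : List R) (n : N) : Prop :=
  IsSFactorization S m l n ∧ (∀ s ∈ l, Irred s) ∧ SPrimitive S n

/-- an (α, β)-S-factorization: each `sᵢ` is α (a kind of irreducible)
and `n` is S-β (a kind of S-primitive). -/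
def IsABFactorization (kα kβ : Fin 3) (m : N) (l : List R) (n : N) : Prop :=
  IsSFactorization S m l n ∧ (∀ s ∈ l, IrredOf kα s) ∧ PrimOf S kβ n

/-- Isomorphism of S-atomic factorizations: same length, S-associate primitive parts,
and the irreducible parts match up to permutation and associates. -/
def FactorIso (l : List R) (n : N) (l' : List R) (n' : N) : Prop :=
  l.length = l'.length ∧ SAssoc S n n' ∧
    ∃ l'' : List R, l'.Perm l'' ∧ List.Forall₂ Assoc l l''

end ElementDefs2

section SetDefs

variable (S : Set R) {N : Type*} [AddCommGroup N] [Module R N]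

/-- `E ⊆ N` is compactly S-atomic. -/
def CompactlySAtomic (E : Set N) : Prop :=
  ∀ m ∈ E, m ≠ 0 → ∃ s n, IsCompactFactorization S m s n

/-- `E ⊆ N` is semi-S-factorable. -/
def SemiSFactorable (E : Set N) : Prop :=
  CompactlySAtomic S E ∧ ∀ m ∈ E, m ≠ 0 → ∀ s n s' n',
    IsCompactFactorization S m s n → IsCompactFactorization S m s' n' → Assoc s s'

/-- `E ⊆ N` is S-factorable. -/
def SFactorable (E : Set N) : Prop :=
  SemiSFactorable S E ∧ ∀ m ∈ E, m ≠ 0 → ∀ s n s' n',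
    IsCompactFactorization S m s n → IsCompactFactorization S m s' n' → SAssoc S n n'

/-- `S` splits `E ⊆ N`. -/
def Splits (E : Set N) : Prop :=
  SemiSFactorable S E ∧
    ∀ r : R, SPrimitive S r → ∀ m : N, SPrimitive S m →
      r • m ≠ 0 → r • m ∈ E → SPrimitive S (r • m)

end SetDefs

/-- The set of zero divisors of the module `M` in `R`. -/
def ZDiv (R : Type*) [CommRing R] (M : Type*) [AddCommGroup M] [Module R M] : Set R :=
  {r : R | ∃ m : M, m ≠ 0 ∧ r • m = 0}

/-- The annihilator of `M` in `R`, as a set. -/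
def AnnSet (R : Type*) [CommRing R] (M : Type*) [AddCommGroup M] [Module R M] : Set R :=
  {r : R | ∀ m : M, r • m = 0}

/-- The annihilator of `M` in `R`, as an ideal. -/
def AnnIdeal (R : Type*) [CommRing R] (M : Type*) [AddCommGroup M] [Module R M] : Ideal R where
  carrier := AnnSet R M
  zero_mem' := fun m => zero_smul R m
  add_mem' := fun {a b} ha hb m => by
    rw [add_smul, ha m, hb m, add_zero]
  smul_mem' := fun c x hx m => by
    rw [smul_eq_mul, mul_smul, hx m, smul_zero]

section ModuleProps

variable (S : Set R) (N : Type*) [AddCommGroup N] [Module R N]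

/-- `N` is S-présimplifiable. -/
def SPresimplifiable : Prop := ∀ s ∈ S, ∀ m : N, s • m = m → IsUnit s ∨ m = 0

/-- `N` is S-atomic. -/
def SAtomicModule : Prop := ∀ m : N, m ≠ 0 → ∃ l n, IsSAtomicFactorization S m l n

/-- `N` is (α, β)-S-atomic. -/
def ABAtomicModule (kα kβ : Fin 3) : Prop :=
  ∀ m : N, m ≠ 0 → ∃ l n, IsABFactorization S kα kβ m l n

/-- `N` is an S-UFM. -/
def SUFM : Prop := SAtomicModule S N ∧ ∀ m : N, m ≠ 0 → ∀ l n l' n',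
  IsSAtomicFactorization S m l n → IsSAtomicFactorization S m l' n' → FactorIso S l n l' n'

/-- `N` is an S-FFM. -/
def SFFM : Prop := SAtomicModule S N ∧ ∀ m : N, m ≠ 0 →
  ∃ Fs : Set (List R × N), Fs.Finite ∧
    ∀ l n, IsSAtomicFactorization S m l n → ∃ p ∈ Fs, FactorIso S l n p.1 p.2

/-- `N` is an S-BFM. -/
def SBFM : Prop := ∀ m : N, m ≠ 0 → ∃ B : ℕ,
  ∀ l n, IsSFactorization S m l n → l.length ≤ B

/-- `N` is an S-HFM. -/
def SHFM : Prop := SAtomicModule S N ∧ ∀ m : N, m ≠ 0 → ∀ l n l' n',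
  IsSAtomicFactorization S m l n → IsSAtomicFactorization S m l' n' → l.length = l'.length

end ModuleProps

section InE

variable (E : Set R)

/-- `R` is présimplifiable in `E`. -/
def PresimpIn : Prop := ∀ a ∈ E, a ≠ 0 → ¬ IsUnit a → ∀ r : R, a = r * a → IsUnit r ∨ a = 0

/-- `R` is atomic in `E`. -/
def AtomicIn : Prop := ∀ a ∈ E, a ≠ 0 → ¬ IsUnit a →
  ∃ l n, IsSAtomicFactorization (Set.univ : Set R) a l n

/-- `R` has unique factorization in `E`. -/
def UFIn : Prop := AtomicIn E ∧ ∀ a ∈ E, a ≠ 0 → ¬ IsUnit a → ∀ l n l' n',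
  IsSAtomicFactorization (Set.univ : Set R) a l n →
  IsSAtomicFactorization (Set.univ : Set R) a l' n' →
  FactorIso (Set.univ : Set R) l n l' n'

/-- `R` has finite factorization in `E`. -/
def FFIn : Prop := AtomicIn E ∧ ∀ a ∈ E, a ≠ 0 → ¬ IsUnit a →
  ∃ Fs : Set (List R × R), Fs.Finite ∧ ∀ l n,
    IsSAtomicFactorization (Set.univ : Set R) a l n →
      ∃ p ∈ Fs, FactorIso (Set.univ : Set R) l n p.1 p.2

/-- `R` is half factorial in `E`. -/
def HFIn : Prop := AtomicIn E ∧ ∀ a ∈ E, a ≠ 0 → ¬ IsUnit a → ∀ l n l' n',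
  IsSAtomicFactorization (Set.univ : Set R) a l n →
  IsSAtomicFactorization (Set.univ : Set R) a l' n' → l.length = l'.length

/-- `R` has bounded factorization in `E`. -/
def BFIn : Prop := ∀ a ∈ E, a ≠ 0 → ¬ IsUnit a →
  ∃ B : ℕ, ∀ l n, IsSFactorization (Set.univ : Set R) a l n → l.length ≤ B

end InE

/-- The set `T = S⁻¹S'` in the localization `R_S`. -/
def locT {S : Set R} (hS : Saturated S) (S' : Set R) : Set (Localization hS.submonoid) :=
  {x | ∃ s' ∈ S', ∃ t : hS.submonoid, x = Localization.mk s' t}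

section DomainDefs

variable (D : Type*) [CommRing D]

/-- two lists of ring elements agree up to order and associates. -/
def ListAssociated (l l' : List D) : Prop :=
  ∃ l'' : List D, l'.Perm l'' ∧ List.Forall₂ Associated l l''

/-- `D` is atomic: every nonzero nonunit is a finite product of irreducibles. -/
def DomAtomic : Prop := ∀ x : D, x ≠ 0 → ¬ IsUnit x →
  ∃ l : List D, (∀ a ∈ l, Irreducible a) ∧ x = l.prod

/-- `D` is a bounded factorization domain. -/
def DomBFD : Prop := ∀ x : D, x ≠ 0 → ¬ IsUnit x →
  ∃ B : ℕ, ∀ l : List D, (∀ a ∈ l, ¬ IsUnit a) → x = l.prod → l.length ≤ B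

/-- `D` is a half factorial domain. -/
def DomHFD : Prop := DomAtomic D ∧ ∀ x : D, x ≠ 0 → ¬ IsUnit x →
  ∀ l l' : List D, (∀ a ∈ l, Irreducible a) → x = l.prod →
    (∀ a ∈ l', Irreducible a) → x = l'.prod → l.length = l'.length

/-- `D` is a finite factorization domain. -/
def DomFFD : Prop := DomAtomic D ∧ ∀ x : D, x ≠ 0 → ¬ IsUnit x →
  ∃ Fs : Set (List D), Fs.Finite ∧ ∀ l : List D, (∀ a ∈ l, Irreducible a) → x = l.prod →
    ∃ l' ∈ Fs, ListAssociated D l l'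

/-- `D` is a unique factorization domain. -/
def DomUFD : Prop := DomAtomic D ∧ ∀ x : D, x ≠ 0 → ¬ IsUnit x →
  ∀ l l' : List D, (∀ a ∈ l, Irreducible a) → x = l.prod →
    (∀ a ∈ l', Irreducible a) → x = l'.prod → ListAssociated D l l'

end DomainDefs

section AXBXdefs

variable (B : Type*) [CommRing B] (A : Subring B)

/-- The ring `R = A + X·B[X]`, as a subring of `B[X]`. -/
def AXBX : Subring (Polynomial B) where
  carrier := {f | f.coeff 0 ∈ A}
  zero_mem' := by simp only [Set.mem_setOf_eq, Polynomial.coeff_zero]; exact zero_mem A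
  one_mem' := by
    simp only [Set.mem_setOf_eq, Polynomial.coeff_one, if_pos rfl]
    exact one_mem A
  add_mem' := fun {f g} hf hg => by
    simp only [Set.mem_setOf_eq, Polynomial.coeff_add] at *
    exact add_mem hf hg
  neg_mem' := fun {f} hf => by
    simp only [Set.mem_setOf_eq, Polynomial.coeff_neg] at *
    exact neg_mem hf
  mul_mem' := fun {f g} hf hg => by
    simp only [Set.mem_setOf_eq, Polynomial.mul_coeff_zero] at *
    exact mul_mem hf hg

/-- The saturated multiplicatively closed subset `S = (U(B) ∩ A) ∪ {u·Xⁿ : u ∈ U(B), n ≥ 1}`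
of `R = A + X·B[X]`. -/
def Sset : Set (AXBX B A) :=
  {f | (∃ u : B, IsUnit u ∧ u ∈ A ∧ (f : Polynomial B) = Polynomial.C u) ∨
       (∃ u : B, IsUnit u ∧ ∃ n : ℕ, 1 ≤ n ∧
          (f : Polynomial B) = Polynomial.C u * Polynomial.X ^ n)}

/-- The saturated multiplicatively closed subset `S₀ = U(B) ∩ A` of `A`. -/
def S0set : Set A := {a : A | IsUnit (a : B)}

end AXBXdefs


section Statement11Aux

variable {M : Type*} [AddCommGroup M] [Module R M]

lemma list_prod_mem_sat {S : Set R} (hS : Saturated S) :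
    ∀ (l : List R), (∀ s ∈ l, s ∈ S) → l.prod ∈ S := by
  intro l
  induction l with
  | nil => intro _; simpa using hS.1
  | cons a t ih =>
      intro h
      rw [List.prod_cons]
      exact hS.2.1 a (h a (by simp)) t.prod (ih fun s hs => h s (by simp [hs]))

/-- If a nonzero `S'`-primitive `r` has a compact `S`-factorization `r = c • r₁`,
then `c` is a unit. -/
lemma content_unit_of_S'prim {S S' : Set R} (hS : Saturated S) (hSS' : S ⊆ S')
    (hM : SemiSFactorable S (Set.univ : Set M))
    {r : M} (hr : r ≠ 0) (hprim : SPrimitive S' r)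
    {c : R} {r₁ : M} (hc : c ∈ S) (hr₁ : SPrimitive S r₁) (heq : r = c • r₁) :
    IsUnit c := by
  have hr₁0 : r₁ ≠ 0 := by
    rintro rfl; exact hr (by rw [heq, smul_zero])
  obtain ⟨⟨t, htS', ht⟩, -⟩ := hprim c (hSS' hc) r₁ heq
  -- ht : r₁ = t • r
  set z : M := t • r₁ with hzdef
  have hr₁z : r₁ = c • z := by
    calc r₁ = t • r := ht
    _ = t • (c • r₁) := by rw [heq]
    _ = c • z := by rw [hzdef, smul_smul, smul_smul, mul_comm]
  have hz0 : z ≠ 0 := by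
    intro h; exact hr₁0 (by rw [hr₁z, h, smul_zero])
  obtain ⟨e, z₁, heS, hz₁, hze⟩ := hM.1 z (Set.mem_univ _) hz0
  have hcomp1 : IsCompactFactorization S r₁ (c * e) z₁ :=
    ⟨hS.2.1 c hc e heS, hz₁, by rw [hr₁z, hze, smul_smul]⟩
  have hcomp2 : IsCompactFactorization S r₁ 1 r₁ := ⟨hS.1, hr₁, (one_smul R r₁).symm⟩
  have hassoc := hM.2 r₁ (Set.mem_univ _) hr₁0 (c * e) z₁ 1 r₁ hcomp1 hcomp2
  obtain ⟨-, x, -, hx⟩ := hassoc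
  -- hx : (1 : R) = x • (c * e)
  rw [smul_eq_mul] at hx
  exact IsUnit.of_mul_eq_one (a := c) (e * x) (by rw [show c * (e * x) = x * (c * e) by ring]; exact hx.symm)

/-- If `z ≠ 0` is `S'`-primitive and `z = s • n` with `s ∈ S`, then `s` is a unit. -/
lemma unit_of_smul_S'prim {S S' : Set R} (hS : Saturated S) (hSS' : S ⊆ S')
    (hM : SemiSFactorable S (Set.univ : Set M))
    {z : M} (hz : z ≠ 0) (hprim : SPrimitive S' z)
    {s : R} {n : M} (hs : s ∈ S) (heq : z = s • n) : IsUnit s := by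
  have hn0 : n ≠ 0 := by rintro rfl; exact hz (by rw [heq, smul_zero])
  obtain ⟨e, n₁, heS, hn₁, hne⟩ := hM.1 n (Set.mem_univ _) hn0
  have : IsUnit (s * e) :=
    content_unit_of_S'prim hS hSS' hM hz hprim (hS.2.1 s hs e heS) hn₁
      (by rw [heq, hne, smul_smul])
  exact isUnit_of_mul_isUnit_left this

/-- Every `S`-factorization extends (in length) to an `S'`-atomic factorization. -/
lemma extend_factorization {S S' : Set R} (hS : Saturated S) (hSS' : S ⊆ S')
    (hM : SemiSFactorable S (Set.univ : Set M)) (hAt : SAtomicModule S' M) :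
    ∀ (l : List R) (m n : M), m ≠ 0 → IsSFactorization S m l n →
      ∃ l' n', IsSAtomicFactorization S' m l' n' ∧ l.length ≤ l'.length := by
  intro l
  induction l with
  | nil =>
      intro m n hm _
      obtain ⟨l', n', h⟩ := hAt m hm
      exact ⟨l', n', h, Nat.zero_le _⟩
  | cons s l ih =>
      intro m n hm hf
      obtain ⟨hcond, heq⟩ := hf
      have hsS : s ∈ S := (hcond s List.mem_cons_self).1
      have hsu : ¬ IsUnit s := (hcond s List.mem_cons_self).2
      have hmy : m = s • (l.prod • n) := by rw [heq, List.prod_cons, mul_smul]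
      have hy0 : l.prod • n ≠ 0 := by
        intro h; exact hm (by rw [hmy, h, smul_zero])
      obtain ⟨v, r, hv, hlen⟩ := ih (l.prod • n) n hy0
        ⟨fun t ht => hcond t (List.mem_cons_of_mem s ht), rfl⟩
      have hyv : l.prod • n = v.prod • r := hv.1.2
      have hr0 : r ≠ 0 := by
        rintro rfl; exact hy0 (by rw [hyv, smul_zero])
      have hz0 : s • r ≠ 0 := by
        intro h
        apply hm
        rw [hmy, hyv, smul_smul, mul_comm, ← smul_smul, h, smul_zero]
      obtain ⟨u, p, hu⟩ := hAt (s • r) hz0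
      have hu1 : 1 ≤ u.length := by
        rcases u with _ | ⟨a, u⟩
        · exfalso
          apply hsu
          have hzp : s • r = p := by
            have := hu.1.2; simpa using this
          exact unit_of_smul_S'prim hS hSS' hM hz0 (hzp ▸ hu.2.2) hsS rfl
        · simp
      refine ⟨v ++ u, p, ⟨⟨?_, ?_⟩, ?_, hu.2.2⟩, ?_⟩
      · intro t ht
        rcases List.mem_append.1 ht with h | h
        · exact hv.1.1 t h
        · exact hu.1.1 t h
      · rw [List.prod_append, mul_smul, ← hu.1.2, hmy, hyv,
          smul_smul, smul_smul, mul_comm]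
      · intro t ht
        rcases List.mem_append.1 ht with h | h
        · exact hv.2.1 t h
        · exact hu.2.1 t h
      · rw [List.length_append, List.length_cons]
        omega

/-- Descent lemma for part 2. -/
lemma descend_compact {S : Set R} (hS : Saturated S) {a : R} (B : ℕ)
    (hbound : ∀ (l : List R) (n : R), (∀ s ∈ l, s ∈ S ∧ ¬ IsUnit s) →
      a = l.prod * n → l.length ≤ B) :
    ∀ (fuel : ℕ) (l : List R) (n : R), (∀ s ∈ l, s ∈ S ∧ ¬ IsUnit s) →
      a = l.prod * n → B + 1 - l.length ≤ fuel →
      ∃ s' n', IsCompactFactorization S a s' n' := by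
  intro fuel
  induction fuel with
  | zero =>
      intro l n hl heq hle
      exact absurd (hbound l n hl heq) (by omega)
  | succ f ih =>
      intro l n hl heq hle
      by_cases hp : SPrimitive S n
      · exact ⟨l.prod, n, list_prod_mem_sat hS l (fun s hs => (hl s hs).1), hp,
          by rw [smul_eq_mul]; exact heq⟩
      · rw [SPrimitive] at hp
        push_neg at hp
        obtain ⟨s, hsS, n', heq', hna⟩ := hp
        rw [smul_eq_mul] at heq'
        have hsu : ¬ IsUnit s := by
          intro hu
          apply hna
          obtain ⟨u, rfl⟩ := hu
          constructor
          · refine ⟨(↑u⁻¹ : R), ?_, ?_⟩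
            · exact ((hS.2.2 (↑u) (↑u⁻¹) (by rw [Units.mul_inv]; exact hS.1)).2)
            · rw [smul_eq_mul, heq', ← mul_assoc, Units.inv_mul, one_mul]
          · exact ⟨(u : R), hsS, by rw [smul_eq_mul]; exact heq'⟩
        have hlen : (s :: l).length ≤ B := by
          apply hbound (s :: l) n'
          · intro t ht
            rcases List.mem_cons.1 ht with h | h
            · exact h ▸ ⟨hsS, hsu⟩
            · exact hl t h
          · rw [List.prod_cons, heq, heq']; ring
        apply ih (s :: l) n'
        · intro t ht
          rcases List.mem_cons.1 ht with h | h
          · exact h ▸ ⟨hsS, hsu⟩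
          · exact hl t h
        · rw [List.prod_cons, heq, heq']; ring
        · simp only [List.length_cons] at hlen ⊢
          omega

end Statement11Aux


theorem statement11 {R : Type*} [CommRing R] {M : Type*} [AddCommGroup M] [Module R M]
    [Nontrivial M] (S S' : Set R) (hS : Saturated S) (hS' : Saturated S') (hSS' : S ⊆ S')
    (hM : SemiSFactorable S (Set.univ : Set M)) (hZ : S ∩ ZDiv R M = ∅) :
    ((SUFM S' M ∨ SHFM S' M ∨ SFFM S' M) → SBFM S M) ∧
    (SBFM S M → CompactlySAtomic S ((AnnSet R M)ᶜ : Set R)) := by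
  constructor
  · intro h
    have hAt : SAtomicModule S' M := by
      rcases h with h | h | h
      · exact h.1
      · exact h.1
      · exact h.1
    have hBd : ∀ m : M, m ≠ 0 → ∃ B : ℕ, ∀ l n,
        IsSAtomicFactorization S' m l n → l.length ≤ B := by
      intro m hm
      rcases h with h | h | h
      · obtain ⟨l₀, n₀, h₀⟩ := h.1 m hm
        exact ⟨l₀.length, fun l n hf => le_of_eq (h.2 m hm l n l₀ n₀ hf h₀).1⟩
      · obtain ⟨l₀, n₀, h₀⟩ := h.1 m hm
        exact ⟨l₀.length, fun l n hf => le_of_eq (h.2 m hm l n l₀ n₀ hf h₀)⟩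
      · obtain ⟨Fs, hFin, hcov⟩ := h.2 m hm
        obtain ⟨B, hB⟩ := (hFin.image fun p => p.1.length).bddAbove
        refine ⟨B, fun l n hf => ?_⟩
        obtain ⟨p, hp, hiso⟩ := hcov l n hf
        exact le_trans (le_of_eq hiso.1) (hB ⟨p, hp, rfl⟩)
    intro m hm
    obtain ⟨B, hB⟩ := hBd m hm
    refine ⟨B, fun l n hf => ?_⟩
    obtain ⟨l', n', h', hlen⟩ := extend_factorization hS hSS' hM hAt l m n hm hf
    exact hlen.trans (hB l' n' h')
  · intro hBFM a ha ha0
    obtain ⟨m₀, hm₀⟩ : ∃ m₀ : M, a • m₀ ≠ 0 := by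
      by_contra h
      push_neg at h
      exact ha h
    obtain ⟨B, hB⟩ := hBFM (a • m₀) hm₀
    have hbound : ∀ (l : List R) (n : R), (∀ s ∈ l, s ∈ S ∧ ¬ IsUnit s) →
        a = l.prod * n → l.length ≤ B := by
      intro l n hl heq
      exact hB l (n • m₀) ⟨hl, by rw [heq, mul_smul]⟩
    exact descend_compact hS B hbound (B + 1) [] a (by simp) (by simp) (by omega)


end FactorizationPaper
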